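/- Let k > 2 and let (A_n) be the anti-k-bonacci sequence, i.e., the anti-recurrence sequence for a = (1, 1, ..., 1) of dimension k. With κ = k² + 1, one has (n-1)κ + 1 ≤ A_n ≤ nκ for every n ≥ 1; that is, A_n lies in the interval I_n = [(n-1)κ + 1, nκ]. -/
import Mathlib


/-- `A` and `B` (indexed from 1) are complementary strictly increasing sequences
of positive integers: every positive integer lies in exactly one of their ranges. -/
def CompPair (A B : ℕ → ℕ) : Prop :=
  StrictMonoOn A (Set.Ici 1) ∧ StrictMonoOn B (Set.Ici 1) ∧
  (∀ n, 1 ≤ n → 1 ≤ A n) ∧ (∀ n, 1 ≤ n → 1 ≤ B n) ∧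
  ∀ m, 1 ≤ m →
    ((∃ n, 1 ≤ n ∧ A n = m) ∧ ¬(∃ n, 1 ≤ n ∧ B n = m)) ∨
    (¬(∃ n, 1 ≤ n ∧ A n = m) ∧ (∃ n, 1 ≤ n ∧ B n = m))

/-- `(A, B)` is the anti-recurrence pair for the positive linear form `a` of dimension `k`:
`A n = Σ_{j=1}^k a_j * B_{(n-1)k+j}` for all `n ≥ 1`. -/
def AntiRec (k : ℕ) (a : Fin k → ℕ) (A B : ℕ → ℕ) : Prop :=
  CompPair A B ∧
  ∀ n, 1 ≤ n → A n = ∑ j : Fin k, a j * B ((n - 1) * k + (j : ℕ) + 1)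

lemma self_le_of_mono {A : ℕ → ℕ} (hf : StrictMonoOn A (Set.Ici 1))
    (hp : ∀ n, 1 ≤ n → 1 ≤ A n) : ∀ n, 1 ≤ n → n ≤ A n := by
  intro n
  induction n with
  | zero => omega
  | succ m ih =>
    intro _
    rcases Nat.eq_zero_or_pos m with hm | hm
    · subst hm; exact hp 1 le_rfl
    · have h1 : A m < A (m+1) := hf (Set.mem_Ici.mpr hm) (Set.mem_Ici.mpr (by omega)) (by omega)
      have := ih hm
      omega

lemma count_split {A B : ℕ → ℕ} (hA : StrictMonoOn A (Set.Ici 1)) (hB : StrictMonoOn B (Set.Ici 1))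
    (hAp : ∀ n, 1 ≤ n → 1 ≤ A n) (hBp : ∀ n, 1 ≤ n → 1 ≤ B n)
    (hcomp : ∀ m, 1 ≤ m → ((∃ n, 1 ≤ n ∧ A n = m) ∧ ¬(∃ n, 1 ≤ n ∧ B n = m)) ∨
      (¬(∃ n, 1 ≤ n ∧ A n = m) ∧ (∃ n, 1 ≤ n ∧ B n = m)))
    (m : ℕ) (hm : 1 ≤ m) :
    ((Finset.Icc 1 m).filter (fun i => A i ≤ m)).card
      + ((Finset.Icc 1 m).filter (fun i => B i ≤ m)).card = m := by
  have hAs := self_le_of_mono hA hAp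
  have hBs := self_le_of_mono hB hBp
  set SA := (Finset.Icc 1 m).filter (fun i => A i ≤ m) with hSA
  set SB := (Finset.Icc 1 m).filter (fun i => B i ≤ m) with hSB
  have hunion : SA.image A ∪ SB.image B = Finset.Icc 1 m := by
    ext v
    simp only [Finset.mem_union, Finset.mem_image, hSA, hSB, Finset.mem_filter,
      Finset.mem_Icc]
    constructor
    · rintro (⟨i, ⟨⟨h1, _⟩, h2⟩, rfl⟩ | ⟨i, ⟨⟨h1, _⟩, h2⟩, rfl⟩)
      · exact ⟨hAp i h1, h2⟩
      · exact ⟨hBp i h1, h2⟩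
    · rintro ⟨h1, h2⟩
      rcases hcomp v h1 with ⟨⟨i, hi1, hi2⟩, -⟩ | ⟨-, ⟨i, hi1, hi2⟩⟩
      · left; exact ⟨i, ⟨⟨hi1, le_trans (hi2 ▸ hAs i hi1) h2⟩, hi2 ▸ h2⟩, hi2⟩
      · right; exact ⟨i, ⟨⟨hi1, le_trans (hi2 ▸ hBs i hi1) h2⟩, hi2 ▸ h2⟩, hi2⟩
  have hdisj : Disjoint (SA.image A) (SB.image B) := by
    rw [Finset.disjoint_left]
    rintro v hvA hvB
    simp only [Finset.mem_image, hSA, hSB, Finset.mem_filter, Finset.mem_Icc] at hvA hvB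
    obtain ⟨i, ⟨⟨hi1, _⟩, _⟩, hiv⟩ := hvA
    obtain ⟨i', ⟨⟨hi'1, _⟩, _⟩, hi'v⟩ := hvB
    have hv1 : 1 ≤ v := hiv ▸ hAp i hi1
    rcases hcomp v hv1 with ⟨-, hno⟩ | ⟨hno, -⟩
    · exact hno ⟨i', hi'1, hi'v⟩
    · exact hno ⟨i, hi1, hiv⟩
  have hcardA : (SA.image A).card = SA.card := by
    apply Finset.card_image_of_injOn
    intro x hx y hy hxy
    rw [Finset.mem_coe, hSA, Finset.mem_filter, Finset.mem_Icc] at hx hy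
    exact hA.injOn (Set.mem_Ici.mpr hx.1.1) (Set.mem_Ici.mpr hy.1.1) hxy
  have hcardB : (SB.image B).card = SB.card := by
    apply Finset.card_image_of_injOn
    intro x hx y hy hxy
    rw [Finset.mem_coe, hSB, Finset.mem_filter, Finset.mem_Icc] at hx hy
    exact hB.injOn (Set.mem_Ici.mpr hx.1.1) (Set.mem_Ici.mpr hy.1.1) hxy
  have := Finset.card_union_of_disjoint hdisj
  rw [hunion, hcardA, hcardB, Nat.card_Icc] at this
  omega

/-- The n-th anti-k-bonacci number lies in the interval I_n = [(n-1)κ+1, nκ], κ = k²+1. -/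
theorem stmt9 (k : ℕ) (hk : 2 < k) (A B : ℕ → ℕ)
    (h : AntiRec k (fun _ => 1) A B) :
    ∀ n, 1 ≤ n → (n - 1) * (k ^ 2 + 1) + 1 ≤ A n ∧ A n ≤ n * (k ^ 2 + 1) := by
  obtain ⟨⟨hAm, hBm, hAp, hBp, hcomp⟩, hrec⟩ := h
  have hAs := self_le_of_mono hAm hAp
  have hBs := self_le_of_mono hBm hBp
  have hk0 : 0 < k := by omega
  -- #{i : B i ≤ B j} = j
  have hBcount : ∀ j, 1 ≤ j →
      ((Finset.Icc 1 (B j)).filter (fun i => B i ≤ B j)).card = j := by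
    intro j hj
    have hEq : (Finset.Icc 1 (B j)).filter (fun i => B i ≤ B j) = Finset.Icc 1 j := by
      ext i
      simp only [Finset.mem_filter, Finset.mem_Icc]
      constructor
      · rintro ⟨⟨h1, h2⟩, h3⟩
        refine ⟨h1, ?_⟩
        by_contra hc
        push_neg at hc
        have := hBm (Set.mem_Ici.mpr hj) (Set.mem_Ici.mpr h1) hc
        omega
      · rintro ⟨h1, h2⟩
        have hBij : B i ≤ B j := by
          rcases eq_or_lt_of_le h2 with rfl | hlt
          · exact le_rfl
          · exact le_of_lt (hBm (Set.mem_Ici.mpr h1) (Set.mem_Ici.mpr hj) hlt)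
        exact ⟨⟨h1, le_trans (hBs i h1) hBij⟩, hBij⟩
    rw [hEq, Nat.card_Icc]
    omega
  -- B j = j + #{i : A i ≤ B j}
  have hBformula : ∀ j, 1 ≤ j →
      B j = j + ((Finset.Icc 1 (B j)).filter (fun i => A i ≤ B j)).card := by
    intro j hj
    have h1 := count_split hAm hBm hAp hBp hcomp (B j) (hBp j hj)
    rw [hBcount j hj] at h1
    omega
  -- strong induction
  intro n
  induction n using Nat.strong_induction_on with
  | _ n IH =>
  intro hn
  obtain ⟨m, rfl⟩ : ∃ m, n = m + 1 := ⟨n - 1, by omega⟩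
  simp only [Nat.add_sub_cancel] at *
  -- the recurrence
  have hAn : A (m+1) = ∑ j : Fin k, B (m * k + (j:ℕ) + 1) := by
    have := hrec (m+1) (by omega)
    simpa using this
  have hidx_le : ∀ j : Fin k, m * k + (j:ℕ) + 1 ≤ (m+1) * k := by
    intro j
    nlinarith [j.isLt]
  -- each B value is < A (m+1)
  have hBlt : ∀ j : Fin k, B (m * k + (j:ℕ) + 1) < A (m+1) := by
    intro j
    have hex : ∃ j' : Fin k, j' ≠ j := by
      refine ⟨⟨if (j:ℕ) = 0 then 1 else 0, by split <;> omega⟩, ?_⟩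
      apply Fin.ne_of_val_ne
      simp only
      split <;> omega
    obtain ⟨j', hne⟩ := hex
    rw [hAn]
    have hpos : 0 < B (m * k + (j':ℕ) + 1) := hBp _ (Nat.le_add_left 1 _)
    exact Finset.single_lt_sum (f := fun i : Fin k => B (m * k + (i:ℕ) + 1)) hne
      (Finset.mem_univ j) (Finset.mem_univ j') hpos (fun _ _ _ => Nat.zero_le _)
  -- c j : the number of earlier A-values below B (idx j)
  set c : Fin k → ℕ := fun j =>
    ((Finset.Icc 1 m).filter (fun i => A i ≤ B (m * k + (j:ℕ) + 1))).card with hc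
  have hcj : ∀ j : Fin k,
      c j = ((Finset.Icc 1 m).filter (fun i => A i ≤ B (m * k + (j:ℕ) + 1))).card :=
    fun j => rfl
  have hBc : ∀ j : Fin k, B (m * k + (j:ℕ) + 1) = m * k + (j:ℕ) + 1 + c j := by
    intro j
    have h1 := hBformula (m * k + (j:ℕ) + 1) (by omega)
    have hEq : (Finset.Icc 1 (B (m * k + (j:ℕ) + 1))).filter
          (fun i => A i ≤ B (m * k + (j:ℕ) + 1))
        = (Finset.Icc 1 m).filter (fun i => A i ≤ B (m * k + (j:ℕ) + 1)) := by
      ext i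
      simp only [Finset.mem_filter, Finset.mem_Icc]
      constructor
      · rintro ⟨⟨hi1, hi2⟩, hi3⟩
        refine ⟨⟨hi1, ?_⟩, hi3⟩
        by_contra hcon
        push_neg at hcon
        have hni : m + 1 ≤ i := by omega
        have hAni : A (m+1) ≤ A i := by
          rcases eq_or_lt_of_le hni with rfl | hlt
          · exact le_rfl
          · exact le_of_lt (hAm (Set.mem_Ici.mpr (by omega)) (Set.mem_Ici.mpr (by omega)) hlt)
        have hlt2 := hBlt j
        omega
      · rintro ⟨⟨hi1, hi2⟩, hi3⟩
        exact ⟨⟨hi1, le_trans (hAs i hi1) hi3⟩, hi3⟩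
    rw [hEq, ← hcj j] at h1
    exact h1
  -- rewrite the sum
  set C : ℕ := ∑ j : Fin k, c j with hC
  set G : ℕ := ∑ j : Fin k, (j:ℕ) with hG
  have hG2 : G * 2 = k * (k - 1) := by
    rw [hG, show (∑ j : Fin k, (j:ℕ)) = ∑ i ∈ Finset.range k, i from
      Fin.sum_univ_eq_sum_range (fun i => i) k]
    exact Finset.sum_range_id_mul_two k
  have hAn2 : A (m+1) = k * (m * k + 1) + G + C := by
    rw [hAn, Finset.sum_congr rfl (fun j _ => hBc j), hG, hC]
    simp only [Finset.sum_add_distrib, Finset.sum_const, Finset.card_univ,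
      Fintype.card_fin, smul_eq_mul]
    ring
  -- upper bound on each c j : k * c j ≤ (m+1) + k
  have hcub : ∀ j : Fin k, k * c j ≤ (m + 1) + k := by
    intro j
    rcases Nat.eq_zero_or_pos (c j) with h0 | hposc
    · rw [h0]; omega
    · have hne : ((Finset.Icc 1 m).filter
          (fun i => A i ≤ B (m * k + (j:ℕ) + 1))).Nonempty := by
        rw [← Finset.card_pos, ← hcj j]; exact hposc
      set m0 := ((Finset.Icc 1 m).filter
          (fun i => A i ≤ B (m * k + (j:ℕ) + 1))).max' hne with hm0
      have hm0mem := ((Finset.Icc 1 m).filter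
          (fun i => A i ≤ B (m * k + (j:ℕ) + 1))).max'_mem hne
      rw [Finset.mem_filter, Finset.mem_Icc] at hm0mem
      obtain ⟨⟨hm01, hm0m⟩, hm0A⟩ := hm0mem
      have hcle : c j ≤ m0 := by
        have hsub : (Finset.Icc 1 m).filter (fun i => A i ≤ B (m * k + (j:ℕ) + 1))
            ⊆ Finset.Icc 1 m0 := by
          intro x hx
          have hx' := hx
          rw [Finset.mem_filter, Finset.mem_Icc] at hx'
          exact Finset.mem_Icc.mpr ⟨hx'.1.1, Finset.le_max' _ x hx⟩
        have hcard := Finset.card_le_card hsub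
        rw [Nat.card_Icc, ← hcj j] at hcard
        omega
      have hIHm0 := (IH m0 (by omega) hm01).1
      have hBidx : B (m * k + (j:ℕ) + 1) = m * k + (j:ℕ) + 1 + c j := hBc j
      obtain ⟨d, hd⟩ : ∃ d, c j = d + 1 := ⟨c j - 1, by omega⟩
      have hkey : d * (k^2 + 1) + 1 ≤ m * k + (j:ℕ) + 1 + (d + 1) := by
        calc d * (k^2 + 1) + 1 ≤ (m0 - 1) * (k^2 + 1) + 1 := by
              have hle1 : d ≤ m0 - 1 := by omega
              exact Nat.add_le_add_right (Nat.mul_le_mul_right _ hle1) 1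
          _ ≤ A m0 := hIHm0
          _ ≤ B (m * k + (j:ℕ) + 1) := hm0A
          _ = m * k + (j:ℕ) + 1 + (d + 1) := by rw [hBidx, hd]
      have he1 : d * (k^2 + 1) = d * k * k + d := by ring
      have hidxle := hidx_le j
      have h2 : d * k * k ≤ (m+1) * k := by
        rw [he1] at hkey
        omega
      have h3 : d * k ≤ m + 1 := Nat.le_of_mul_le_mul_right h2 hk0
      have h4 : k * c j = d * k + k := by rw [hd]; ring
      omega
  have hCub : C ≤ (m + 1) + k := by
    have h1 : k * C = ∑ j : Fin k, k * c j := by rw [hC, Finset.mul_sum]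
    have h2 : ∑ j : Fin k, k * c j ≤ ∑ _j : Fin k, ((m + 1) + k) :=
      Finset.sum_le_sum (fun j _ => hcub j)
    rw [Finset.sum_const, Finset.card_univ, Fintype.card_fin, smul_eq_mul] at h2
    have h3 : k * C ≤ k * ((m + 1) + k) := by omega
    exact Nat.le_of_mul_le_mul_left h3 hk0
  -- lower bound on each c j
  set t := m / k with ht
  have htk : t * k ≤ m := Nat.div_mul_le_self m k
  have htm : t ≤ m := Nat.div_le_self m k
  have hclb : ∀ j : Fin k, t ≤ c j := by
    intro j
    have key : ∀ u, u ≤ t → u ≤ c j := by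
      intro u
      induction u with
      | zero => omega
      | succ u ihu =>
        intro hu
        have hu' : u ≤ c j := ihu (by omega)
        have hsub : Finset.Icc 1 (u+1)
            ⊆ (Finset.Icc 1 m).filter (fun i => A i ≤ B (m * k + (j:ℕ) + 1)) := by
          intro i hi
          rw [Finset.mem_Icc] at hi
          obtain ⟨hi1, hi2⟩ := hi
          have hult : u + 1 ≤ t := hu
          have him : i ≤ m := by omega
          have hIHi := (IH i (by omega) hi1).2
          have h1 : (u+1) * k ≤ t * k := Nat.mul_le_mul_right k hu
          have h2 : (u+1) * k * k ≤ m * k := Nat.mul_le_mul_right k (le_trans h1 htk)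
          have h3 : A i ≤ (u+1) * (k^2+1) := by
            calc A i ≤ i * (k^2+1) := hIHi
              _ ≤ (u+1) * (k^2+1) := Nat.mul_le_mul_right _ hi2
          have h4 : (u+1) * (k^2+1) = (u+1) * k * k + (u + 1) := by ring
          have h5 : B (m * k + (j:ℕ) + 1) = m * k + (j:ℕ) + 1 + c j := hBc j
          have h6 : A i ≤ B (m * k + (j:ℕ) + 1) := by
            rw [h5]
            omega
          exact Finset.mem_filter.mpr ⟨Finset.mem_Icc.mpr ⟨hi1, him⟩, h6⟩
        have hcard := Finset.card_le_card hsub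
        rw [Nat.card_Icc, ← hcj j] at hcard
        omega
    exact key t le_rfl
  have hCtk : k * t ≤ C := by
    have h2 : ∑ _j : Fin k, t ≤ ∑ j : Fin k, c j := Finset.sum_le_sum (fun j _ => hclb j)
    rw [Finset.sum_const, Finset.card_univ, Fintype.card_fin, smul_eq_mul] at h2
    exact h2
  have hmtk : m + 1 ≤ k * t + k := by
    have h1 : k * t + m % k = m := Nat.div_add_mod m k
    have h2 : m % k < k := Nat.mod_lt m hk0
    omega
  -- final arithmetic
  have hkk : k * (k - 1) + k = k * k := by
    have e : k - 1 + 1 = k := by omega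
    calc k * (k - 1) + k = k * ((k - 1) + 1) := by ring
      _ = k * k := by rw [e]
  have h3k : 3 * k ≤ k * k := Nat.mul_le_mul_right k (by omega)
  have hGk : G + 2 * k ≤ k * k := by omega
  have hpow : k ^ 2 = k * k := sq k
  constructor
  · -- lower bound
    have h1 : m * (k^2 + 1) + 1 = m * k * k + (m + 1) := by ring
    have h2 : k * (m * k + 1) = m * k * k + k := by ring
    rw [hAn2, h1, h2]
    omega
  · -- upper bound
    have h1 : (m+1) * (k^2 + 1) = m * k * k + k * k + (m + 1) := by rw [hpow]; ring
    have h2 : k * (m * k + 1) = m * k * k + k := by ring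
    rw [hAn2, h1, h2]
    omega
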